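/- Let L ⊆ Z^n be a lattice generated by a single nonzero nonnegative vector w. For any two coprime integers k, l ≥ 2, the set {k·w, l·w} is a Markov basis of L, and it is minimal (no proper subset is a Markov basis). -/
import Mathlib


/-- `M` is a Markov basis of the lattice `L ⊆ ℤⁿ`: any two nonnegative vectors whose
difference lies in `L` are connected by a sequence of moves from `±M` staying in `ℕⁿ`. -/
def IsMarkovBasis {n : ℕ} (L : AddSubgroup (Fin n → ℤ)) (M : Set (Fin n → ℤ)) : Prop :=
  (M ⊆ L) ∧
  ∀ a b : Fin n → ℤ, (∀ i, 0 ≤ a i) → (∀ i, 0 ≤ b i) → a - b ∈ L →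
    ∃ (s : ℕ) (v : Fin s → (Fin n → ℤ)),
      (∀ i, v i ∈ M ∨ -v i ∈ M) ∧
      (∀ p : Fin s, ∀ j, 0 ≤ (a + ∑ i ∈ Finset.Iic p, v i) j) ∧
      a + ∑ i, v i = b

lemma aux_rep (k l m : ℤ) (hk : 1 ≤ k) (hl : 1 ≤ l) (hcop : IsCoprime k l) :
    ∃ x y : ℕ, (x:ℤ)*k - (y:ℤ)*l = m := by
  obtain ⟨u, v, huv⟩ := hcop
  set t : ℕ := (|m*u| + |m*(-v)|).toNat with ht
  have htt : (|m*u| + |m*(-v)|) ≤ (t:ℤ) := Int.self_le_toNat _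
  have htn : (0:ℤ) ≤ (t:ℤ) := Int.natCast_nonneg t
  have hx : (0:ℤ) ≤ m*u + t*l := by
    nlinarith [neg_abs_le (m*u), abs_nonneg (m*(-v))]
  have hy : (0:ℤ) ≤ m*(-v) + t*k := by
    nlinarith [neg_abs_le (m*(-v)), abs_nonneg (m*u)]
  refine ⟨(m*u + t*l).toNat, (m*(-v) + t*k).toNat, ?_⟩
  rw [Int.toNat_of_nonneg hx, Int.toNat_of_nonneg hy]
  linear_combination m*huv

lemma card_filter_val_lt (s x : ℕ) (hxs : x ≤ s) :
    (Finset.univ.filter (fun i : Fin s => (i:ℕ) < x)).card = x := by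
  rw [← Finset.card_range x]
  apply Finset.card_bij (fun (i : Fin s) _ => (i:ℕ))
  · intro i hi; simp at hi ⊢; exact hi
  · intro i _ j _ h; exact Fin.ext h
  · intro j hj
    simp at hj
    exact ⟨⟨j, lt_of_lt_of_le hj hxs⟩, by simp [hj], rfl⟩

lemma connect {n : ℕ} (w : Fin n → ℤ) (hwpos : ∀ i, 0 ≤ w i) (k l : ℤ)
    (hk : 0 ≤ k) (hl : 0 ≤ l) (x y : ℕ) (a b : Fin n → ℤ)
    (ha : ∀ i, 0 ≤ a i) (hb : ∀ i, 0 ≤ b i)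
    (hab : a + ((x:ℤ)*k - (y:ℤ)*l) • w = b) :
    ∃ (s : ℕ) (v : Fin s → (Fin n → ℤ)),
      (∀ i, v i = k • w ∨ v i = -(l • w)) ∧
      (∀ p : Fin s, ∀ j, 0 ≤ (a + ∑ i ∈ Finset.Iic p, v i) j) ∧
      a + ∑ i, v i = b := by
  set s := x + y with hs
  set v : Fin s → (Fin n → ℤ) := fun i => if (i:ℕ) < x then k • w else -(l • w) with hv
  have key : ∀ j, a j + (x:ℤ)*(k * w j) - (y:ℤ)*(l * w j) = b j := by
    intro j
    have := congr_fun hab j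
    simp [Pi.smul_apply, smul_eq_mul] at this
    linear_combination this
  have hsum : ∀ T : Finset (Fin s), ∑ i ∈ T, v i =
      ((T.filter (fun i : Fin s => (i:ℕ) < x)).card : ℤ) • (k • w) -
      ((T.filter (fun i : Fin s => ¬ (i:ℕ) < x)).card : ℤ) • (l • w) := by
    intro T
    rw [hv]
    rw [Finset.sum_ite, Finset.sum_const, Finset.sum_const]
    rw [natCast_zsmul, natCast_zsmul, smul_neg, sub_eq_add_neg]
  refine ⟨s, v, fun i => ?_, fun p j => ?_, ?_⟩
  · by_cases h : (i:ℕ) < x <;> simp [hv, h]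
  · have hps : (p:ℕ) < x + y := by simpa [hs] using p.isLt
    set c := ((Finset.Iic p).filter (fun i : Fin s => (i:ℕ) < x)).card with hc
    set d := ((Finset.Iic p).filter (fun i : Fin s => ¬ (i:ℕ) < x)).card with hd
    have hcd : c + d = (p:ℕ) + 1 := by
      rw [hc, hd, Finset.card_filter_add_card_filter_not, Fin.card_Iic]
    rw [hsum]
    simp only [Pi.add_apply, Pi.sub_apply, Pi.smul_apply, smul_eq_mul]
    rw [← hc, ← hd]
    rcases Nat.eq_zero_or_pos d with hd0 | hdpos
    · have h1 : (0:ℤ) ≤ (c:ℤ) * (k * w j) :=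
        mul_nonneg (Int.natCast_nonneg c) (mul_nonneg hk (hwpos j))
      rw [hd0]
      push_cast
      linarith [ha j]
    · have hxp : x ≤ (p:ℕ) := by
        obtain ⟨i, hi⟩ := Finset.card_pos.mp hdpos
        simp only [Finset.mem_filter, Finset.mem_Iic, not_lt] at hi
        exact le_trans hi.2 hi.1
      have hcx : c = x := by
        have heq : (Finset.Iic p).filter (fun i : Fin s => (i:ℕ) < x) =
            Finset.univ.filter (fun i : Fin s => (i:ℕ) < x) := by
          ext i
          simp only [Finset.mem_filter, Finset.mem_Iic, Finset.mem_univ, true_and]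
          constructor
          · exact fun h => h.2
          · intro h
            exact ⟨Fin.le_def.mpr (le_trans (le_of_lt h) hxp), h⟩
        rw [hc, heq, card_filter_val_lt s x (by omega)]
      have hdy : d ≤ y := by omega
      have h1 : (0:ℤ) ≤ ((y:ℤ) - (d:ℤ)) * (l * w j) :=
        mul_nonneg (by exact_mod_cast sub_nonneg.mpr (Int.ofNat_le.mpr hdy))
          (mul_nonneg hl (hwpos j))
      rw [hcx]
      nlinarith [key j, hb j]
  · rw [hsum]
    have hc0 : (Finset.univ.filter (fun i : Fin s => (i:ℕ) < x)).card = x :=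
      card_filter_val_lt s x (by omega)
    have hd0 : (Finset.univ.filter (fun i : Fin s => ¬ (i:ℕ) < x)).card = y := by
      have h2 := Finset.card_filter_add_card_filter_not
        (s := (Finset.univ : Finset (Fin s))) (p := fun i : Fin s => (i:ℕ) < x)
      rw [Finset.card_univ, Fintype.card_fin, hc0] at h2
      omega
    rw [hc0, hd0]
    funext j
    simp only [Pi.add_apply, Pi.sub_apply, Pi.smul_apply, smul_eq_mul]
    linear_combination key j

lemma smul_w_cancel {n : ℕ} (w : Fin n → ℤ) (hw : w ≠ 0) {c : ℤ} (h : c • w = 0) : c = 0 := by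
  obtain ⟨i, hi⟩ := Function.ne_iff.mp hw
  have := congr_fun h i
  simp [smul_eq_mul] at this
  rcases this with h | h
  · exact h
  · exact absurd h (by simpa using hi)

lemma sum_pm {n : ℕ} (s : ℕ) (u : Fin n → ℤ) (v : Fin s → (Fin n → ℤ))
    (h : ∀ i, v i = u ∨ v i = -u) : ∃ t : ℤ, ∑ i, v i = t • u := by
  have hmem : ∑ i, v i ∈ AddSubgroup.zmultiples u := by
    refine AddSubgroup.sum_mem _ (fun i _ => ?_)
    rcases h i with h | h <;> rw [h]
    · exact AddSubgroup.mem_zmultiples u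
    · exact neg_mem (AddSubgroup.mem_zmultiples u)
  obtain ⟨t, ht⟩ := AddSubgroup.mem_zmultiples_iff.mp hmem
  exact ⟨t, ht.symm⟩

/-- No subset of `{l•w}` is a Markov basis when `k ≥ 2` is coprime to `l`. -/
lemma no_basis_subset_single {n : ℕ} (w : Fin n → ℤ) (hw : w ≠ 0)
    (hwpos : ∀ i, 0 ≤ w i) (k l : ℤ) (hk : 2 ≤ k) (hl : 2 ≤ l)
    (hcop : IsCoprime k l) (S : Set (Fin n → ℤ)) (hS : S ⊆ {l • w}) :
    ¬ IsMarkovBasis (AddSubgroup.zmultiples w) S := by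
  rintro ⟨-, hconn⟩
  have ha : ∀ i, 0 ≤ (k • w) i := fun i => by
    simp only [Pi.smul_apply, smul_eq_mul]
    exact mul_nonneg (by linarith) (hwpos i)
  have hmem : (k • w) - 0 ∈ AddSubgroup.zmultiples w := by
    rw [sub_zero]; exact AddSubgroup.mem_zmultiples_iff.mpr ⟨k, rfl⟩
  obtain ⟨s, v, hvmem, -, hsum⟩ := hconn (k • w) 0 ha (fun i => le_refl 0) hmem
  have hpm : ∀ i, v i = l • w ∨ v i = -(l • w) := by
    intro i
    rcases hvmem i with h | h
    · exact Or.inl (hS h)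
    · right
      have := hS h
      simp only [Set.mem_singleton_iff] at this
      rw [← this, neg_neg]
  obtain ⟨t, ht⟩ := sum_pm s (l • w) v hpm
  rw [ht, smul_smul] at hsum
  have hzero : (k + t * l) • w = 0 := by
    rw [add_smul]; exact hsum
  have hkl : k + t * l = 0 := smul_w_cancel w hw hzero
  have hdvd : l ∣ k := ⟨-t, by linarith⟩
  have : IsUnit l := hcop.isUnit_of_dvd' hdvd dvd_rfl
  rw [Int.isUnit_iff] at this
  omega

/-- If `L` is generated by a single nonzero nonnegative vector `w`, then for any coprime
integers `k, l ≥ 2`, the set `{k•w, l•w}` is a minimal Markov basis of `L`. -/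
theorem markov_basis_coprime_multiples {n : ℕ} (w : Fin n → ℤ)
    (hw : w ≠ 0) (hwpos : ∀ i, 0 ≤ w i) (k l : ℤ) (hk : 2 ≤ k) (hl : 2 ≤ l)
    (hcop : IsCoprime k l) :
    IsMarkovBasis (AddSubgroup.zmultiples w) ({k • w, l • w} : Set (Fin n → ℤ)) ∧
    ∀ S : Set (Fin n → ℤ), S ⊂ ({k • w, l • w} : Set (Fin n → ℤ)) →
      ¬ IsMarkovBasis (AddSubgroup.zmultiples w) S := by
  constructor
  · constructor
    · rintro z (rfl | rfl)
      · exact AddSubgroup.mem_zmultiples_iff.mpr ⟨k, rfl⟩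
      · exact AddSubgroup.mem_zmultiples_iff.mpr ⟨l, rfl⟩
    · intro a b ha hb hab
      obtain ⟨m, hm⟩ := AddSubgroup.mem_zmultiples_iff.mp hab
      obtain ⟨x, y, hxy⟩ := aux_rep k l (-m) (by linarith) (by linarith) hcop
      have hab' : a + ((x:ℤ)*k - (y:ℤ)*l) • w = b := by
        rw [hxy]
        have : m • w = a - b := hm
        rw [show (-m) • w = -(m • w) by rw [neg_smul], this]
        abel
      obtain ⟨s, v, hvm, hpos, hfin⟩ :=
        connect w hwpos k l (by linarith) (by linarith) x y a b ha hb hab'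
      refine ⟨s, v, fun i => ?_, hpos, hfin⟩
      rcases hvm i with h | h
      · exact Or.inl (by rw [h]; exact Set.mem_insert _ _)
      · refine Or.inr ?_
        rw [h, neg_neg]
        exact Set.mem_insert_iff.mpr (Or.inr rfl)
  · intro S hSsub
    have hne : k • w ≠ l • w := by
      intro h
      have : (k - l) • w = 0 := by rw [sub_smul, h, sub_self]
      have hkl : k = l := by have := smul_w_cancel w hw this; omega
      have : IsUnit l := hcop.isUnit_of_dvd' (by rw [hkl]) dvd_rfl
      rw [Int.isUnit_iff] at this
      omega
    obtain ⟨hsub, hne'⟩ := hSsub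
    by_cases hkS : k • w ∈ S
    · -- then l • w ∉ S, so S ⊆ {k • w}
      have hlS : l • w ∉ S := by
        intro hlS
        apply hne'
        rintro z (rfl | rfl)
        · exact hkS
        · exact hlS
      have hS' : S ⊆ {k • w} := by
        intro z hz
        rcases hsub hz with h | h
        · exact h
        · exact absurd (h ▸ hz) hlS
      exact no_basis_subset_single w hw hwpos l k hl hk hcop.symm S hS'
    · have hS' : S ⊆ {l • w} := by
        intro z hz
        rcases hsub hz with h | h
        · exact absurd (h ▸ hz) hkS
        · exact h
      exact no_basis_subset_single w hw hwpos k l hk hl hcop S hS'
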